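/- Let (X,d) be a metric space and u, v be normal upper semicontinuous fuzzy sets in X. Define d̄ on X×[0,1] by d̄((x,α),(y,β)) = d(x,y) + |α−β| and let H_end(u,v) be the Hausdorff distance between the endographs end u = {(x,t) ∈ X×[0,1] : u(x) ≥ t} and end v with respect to d̄. Then for p ≥ 1 and any measurable function f : [0,1] → [0,∞] with f(α) ≥ H([u]_α, [v]_α) for all α, one has (∫₀¹ f(α)^p dα)^{1/p} ≥ (H_end(u,v)^{p+1}/(p+1))^{1/p}. -/

import Mathlib

open Set ENNReal MeasureTheory

variable {X : Type*} [MetricSpace X]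

/-- The metric `d̄((x,α),(y,β)) = d(x,y) + |α − β|` on `X × [0,1]` (as an extended distance). -/
noncomputable def sumDist (p q : X × ℝ) : ℝ≥0∞ := edist p.1 q.1 + edist p.2 q.2

/-- The endograph of a fuzzy set `u`, as a subset of `X × [0,1] ⊆ X × ℝ`. -/
def endo (u : X → ℝ) : Set (X × ℝ) := {p | p.2 ∈ Set.Icc (0 : ℝ) 1 ∧ p.2 ≤ u p.1}

/-- The Hausdorff distance between subsets of `X × ℝ` induced by `sumDist`. -/
noncomputable def hausSum (S T : Set (X × ℝ)) : ℝ≥0∞ :=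
  max (⨆ p ∈ S, ⨅ q ∈ T, sumDist p q) (⨆ q ∈ T, ⨅ p ∈ S, sumDist p q)

/-- Core estimate: if `c` is below the one-sided Hausdorff excess of `endo u` over `endo v`,
then `c ^ (p+1) ≤ (p+1) * ∫₀¹ f^p`. -/
lemma core_aux (u v : X → ℝ)
    (hv01 : ∀ x, v x ∈ Set.Icc (0:ℝ) 1)
    (p : ℝ) (hp : 1 ≤ p) (f : ℝ → ℝ≥0∞) (hf : Measurable f)
    (hfH : ∀ α ∈ Set.Ioc (0:ℝ) 1,
      EMetric.hausdorffEdist {x | α ≤ u x} {x | α ≤ v x} ≤ f α)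
    (c : ℝ≥0∞) (hc : c < ⨆ q ∈ endo u, ⨅ r ∈ endo v, sumDist q r) :
    c ^ (p+1) ≤ ENNReal.ofReal (p+1) * ∫⁻ α in Set.Icc (0:ℝ) 1, f α ^ p := by
  have hp0 : (0:ℝ) ≤ p := by linarith
  have hp1 : (0:ℝ) < p + 1 := by linarith
  rw [lt_iSup_iff] at hc
  obtain ⟨⟨x, t⟩, hc⟩ := hc
  rw [lt_iSup_iff] at hc
  obtain ⟨⟨⟨ht0, ht1⟩, htu⟩, hc⟩ := hc
  have hle : ∀ r ∈ endo v, c < sumDist (x, t) r := fun r hr =>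
    hc.trans_le (iInf₂_le r hr)
  have hct : c < ENNReal.ofReal t := by
    have h0 := hle (x, 0) ⟨⟨le_refl 0, zero_le_one⟩, (hv01 x).1⟩
    simpa [sumDist, edist_dist, Real.dist_eq, abs_of_nonneg ht0] using h0
  have hcne : c ≠ ⊤ := ne_top_of_lt hct
  set c' := c.toReal with hc'def
  have hc'eq : c = ENNReal.ofReal c' := (ENNReal.ofReal_toReal hcne).symm
  have hc'0 : 0 ≤ c' := ENNReal.toReal_nonneg
  have hc't : c' < t := (ENNReal.lt_ofReal_iff_toReal_lt hcne).mp hct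
  set a := t - c' with hadef
  have ha0 : 0 ≤ a := by simp [hadef]; linarith
  have hat : a ≤ t := by simp [hadef]; linarith
  -- key pointwise bound
  have key : ∀ β ∈ Set.Ioc (0:ℝ) t, c - ENNReal.ofReal (t - β) ≤ f β := by
    rintro β ⟨hβ0, hβt⟩
    have hxmem : x ∈ {x' | β ≤ u x'} := le_trans hβt htu
    have h1 : EMetric.infEdist x {x' | β ≤ v x'} ≤ f β :=
      (EMetric.infEdist_le_hausdorffEdist_of_mem hxmem).trans
        (hfH β ⟨hβ0, hβt.trans ht1⟩)
    refine le_trans ?_ h1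
    rw [EMetric.infEdist]
    refine le_iInf₂ fun y hy => ?_
    rw [tsub_le_iff_right]
    have := hle (y, β) ⟨⟨hβ0.le, hβt.trans ht1⟩, hy⟩
    rw [sumDist] at this
    have hedist : edist t β = ENNReal.ofReal (t - β) := by
      rw [edist_dist, Real.dist_eq, abs_of_nonneg (by linarith)]
    simp only at this
    rw [hedist] at this
    exact this.le
  -- continuity and integrability of the comparison function
  have hcont : Continuous fun β : ℝ => (β - a) ^ p :=
    (Real.continuous_rpow_const hp0).comp (continuous_id.sub continuous_const)
  have hint : IntegrableOn (fun β : ℝ => (β - a) ^ p) (Set.Ioc a t) :=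
    hcont.integrableOn_Ioc
  -- pointwise comparison on Ioc a t
  have step1 : ∫⁻ β in Set.Ioc a t, ENNReal.ofReal ((β - a) ^ p) ≤
      ∫⁻ β in Set.Ioc a t, f β ^ p := by
    refine setLIntegral_mono (hf.pow_const p) fun β hβ => ?_
    obtain ⟨hβa, hβt⟩ := hβ
    have hβ0 : 0 < β := lt_of_le_of_lt ha0 hβa
    have hkey := key β ⟨hβ0, hβt⟩
    have heq : c - ENNReal.ofReal (t - β) = ENNReal.ofReal (β - a) := by
      rw [hc'eq, ← ENNReal.ofReal_sub _ (by linarith : (0:ℝ) ≤ t - β)]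
      congr 1
      simp [hadef]; ring
    rw [heq] at hkey
    calc ENNReal.ofReal ((β - a) ^ p) = ENNReal.ofReal (β - a) ^ p := by
          rw [← ENNReal.ofReal_rpow_of_nonneg (by linarith) hp0]
      _ ≤ f β ^ p := ENNReal.rpow_le_rpow hkey hp0
  -- compute the lower integral
  have step2 : ∫⁻ β in Set.Ioc a t, ENNReal.ofReal ((β - a) ^ p) =
      ENNReal.ofReal (c' ^ (p+1) / (p+1)) := by
    rw [← ofReal_integral_eq_lintegral_ofReal hint ?nonneg]
    case nonneg =>
      filter_upwards [ae_restrict_mem measurableSet_Ioc] with β hβ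
      have : 0 ≤ β - a := by linarith [hβ.1]
      positivity
    congr 1
    rw [← intervalIntegral.integral_of_le hat]
    rw [intervalIntegral.integral_comp_sub_right (fun s => s ^ p) a]
    have : t - a = c' := by simp [hadef]
    rw [this, sub_self]
    rw [integral_rpow (Or.inl (by linarith : (-1:ℝ) < p))]
    rw [Real.zero_rpow (by linarith : p + 1 ≠ 0)]
    ring
  -- assemble
  have hsub : Set.Ioc a t ⊆ Set.Icc (0:ℝ) 1 := fun β hβ =>
    ⟨(lt_of_le_of_lt ha0 hβ.1).le, hβ.2.trans ht1⟩
  calc c ^ (p+1) = ENNReal.ofReal (c' ^ (p+1)) := by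
        rw [hc'eq, ENNReal.ofReal_rpow_of_nonneg hc'0 (by linarith)]
    _ = ENNReal.ofReal ((p+1) * (c' ^ (p+1) / (p+1))) := by
        rw [mul_div_cancel₀ _ (by linarith : p + 1 ≠ 0)]
    _ = ENNReal.ofReal (p+1) * ENNReal.ofReal (c' ^ (p+1) / (p+1)) :=
        ENNReal.ofReal_mul (by linarith)
    _ ≤ ENNReal.ofReal (p+1) * ∫⁻ β in Set.Ioc a t, f β ^ p := by
        rw [← step2]; exact mul_le_mul_right step1 _
    _ ≤ ENNReal.ofReal (p+1) * ∫⁻ α in Set.Icc (0:ℝ) 1, f α ^ p :=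
        mul_le_mul_right (lintegral_mono_set hsub) _

/-- For normal upper semicontinuous fuzzy sets `u, v`, `p ≥ 1` and any measurable
`f : [0,1] → [0,∞]` dominating `α ↦ H([u]_α, [v]_α)`, one has
`(∫₀¹ f^p)^{1/p} ≥ (H_end(u,v)^{p+1}/(p+1))^{1/p}`. -/
theorem stmt_15 (u v : X → ℝ)
    (hu01 : ∀ x, u x ∈ Set.Icc (0 : ℝ) 1) (hv01 : ∀ x, v x ∈ Set.Icc (0 : ℝ) 1)
    (hu : ∀ α ∈ Set.Ioc (0 : ℝ) 1, {x | α ≤ u x}.Nonempty ∧ IsClosed {x | α ≤ u x})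
    (hv : ∀ α ∈ Set.Ioc (0 : ℝ) 1, {x | α ≤ v x}.Nonempty ∧ IsClosed {x | α ≤ v x})
    (p : ℝ) (hp : 1 ≤ p) (f : ℝ → ℝ≥0∞) (hf : Measurable f)
    (hfH : ∀ α : ℝ,
      EMetric.hausdorffEdist
          (if α ≤ 0 then closure {x | 0 < u x} else {x | α ≤ u x})
          (if α ≤ 0 then closure {x | 0 < v x} else {x | α ≤ v x}) ≤ f α) :
    (hausSum (endo u) (endo v) ^ (p + 1) / ENNReal.ofReal (p + 1)) ^ (1 / p) ≤
      (∫⁻ α in Set.Icc (0 : ℝ) 1, f α ^ p) ^ (1 / p) := by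
  have hp1 : (0:ℝ) < p + 1 := by linarith
  have hfH' : ∀ α ∈ Set.Ioc (0:ℝ) 1,
      EMetric.hausdorffEdist {x | α ≤ u x} {x | α ≤ v x} ≤ f α := by
    rintro α ⟨hα0, _⟩
    have h := hfH α
    rwa [if_neg (not_le.mpr hα0), if_neg (not_le.mpr hα0)] at h
  have hfH'' : ∀ α ∈ Set.Ioc (0:ℝ) 1,
      EMetric.hausdorffEdist {x | α ≤ v x} {x | α ≤ u x} ≤ f α := by
    intro α hα
    refine EMetric.hausdorffEdist_comm.trans_le ?_
    exact hfH' α hα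
  refine ENNReal.rpow_le_rpow ?_ (by positivity)
  refine ENNReal.div_le_of_le_mul' ?_
  rw [mul_comm]
  refine le_of_forall_lt_imp_le_of_dense fun b hb => ?_
  set c := b ^ (1/(p+1)) with hcdef
  have hcb : c ^ (p+1) = b := by
    rw [hcdef, ← ENNReal.rpow_mul, one_div_mul_cancel hp1.ne', ENNReal.rpow_one]
  have hch : c < hausSum (endo u) (endo v) := by
    by_contra h
    push_neg at h
    exact absurd (hcb ▸ ENNReal.rpow_le_rpow h hp1.le) (not_le.mpr hb)
  rw [← hcb]
  rw [hausSum, lt_max_iff] at hch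
  rcases hch with hch | hch
  · exact (core_aux u v hv01 p hp f hf hfH' c hch).trans (mul_comm _ _).le
  · have e : (⨆ q ∈ endo v, ⨅ p' ∈ endo u, sumDist p' q) =
        ⨆ q ∈ endo v, ⨅ p' ∈ endo u, sumDist q p' :=
      iSup_congr fun q => iSup_congr fun _ => iInf_congr fun p' =>
        iInf_congr fun _ => by simp [sumDist, edist_comm]
    rw [e] at hch
    exact (core_aux v u hu01 p hp f hf hfH'' c hch).trans (mul_comm _ _).le
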